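/- arXiv:1605.03546 — 2 statements merged into one kernel-verified Lean document; each statement's English description precedes it below -/
import Mathlib

section
/- If every vertex reachable from o by the run has a directed path to d in (V, E) (no reachable dead ends exist in the run's trajectory), then the run from o terminates, and the total number of edge traversals is at most |E| · 2^{n+1}, where n = |V|. -/
open scoped Classical

/-- A switch graph: every vertex has an even successor `s0 v` and an odd successor `s1 v`. -/
structure SwitchGraph (V : Type) where
  s0 : V → V
  s1 : V → V

namespace SwitchGraph

variable {V : Type}

/-- The successor of `v` along the edge of parity `b` (`false` = even, `true` = odd). -/
def succ (G : SwitchGraph V) (v : V) (b : Bool) : V :=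
  if b then G.s1 v else G.s0 v

/-- One step of the run: move to the currently active successor and flip the switch. -/
def step [DecidableEq V] (G : SwitchGraph V) (p : V × (V → Bool)) : V × (V → Bool) :=
  (G.succ p.1 (p.2 p.1), Function.update p.2 p.1 (!p.2 p.1))

/-- The state of the run after `n` steps, starting at `o` with all switches even,
stopping (freezing) upon reaching `d`. -/
def run [DecidableEq V] (G : SwitchGraph V) (o d : V) (n : ℕ) : V × (V → Bool) :=
  (fun p => if p.1 = d then p else G.step p)^[n] (o, fun _ => false)

/-- The run from `o` terminates at `d`. -/
def Terminates [DecidableEq V] (G : SwitchGraph V) (o d : V) : Prop :=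
  ∃ n, (G.run o d n).1 = d

/-- Number of traversals of the outgoing edge of `v` of parity `b` during
the first `N` steps of the run. -/
def traversals [DecidableEq V] (G : SwitchGraph V) (o d : V) (N : ℕ) (v : V) (b : Bool) : ℕ :=
  ((Finset.range N).filter
    (fun n => (G.run o d n).1 = v ∧ v ≠ d ∧ (G.run o d n).2 v = b)).card

/-- Total weight on edges leaving `v`. -/
def outflow {M : Type} [AddCommMonoid M] (x : V → Bool → M) (v : V) : M :=
  x v false + x v true

/-- Total weight on edges entering `v`. -/
def inflow [Fintype V] [DecidableEq V] (G : SwitchGraph V) {M : Type} [AddCommMonoid M]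
    (x : V → Bool → M) (v : V) : M :=
  ∑ u : V, ∑ b : Bool, if G.succ u b = v then x u b else 0

/-- A switching flow: flow conservation of value 1 from `o` to `d`, together with the
balancing condition `x v true ≤ x v false ≤ x v true + 1` at every vertex. -/
def IsSwitchingFlow [Fintype V] [DecidableEq V] (G : SwitchGraph V) (o d : V)
    (x : V → Bool → ℕ) : Prop :=
  (∀ v, outflow x v + (if v = d then 1 else 0) = G.inflow x v + (if v = o then 1 else 0)) ∧
  (∀ v, x v true ≤ x v false ∧ x v false ≤ x v true + 1)

/-- The edge relation of the underlying directed graph `(V, E)`. -/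
def stepRel (G : SwitchGraph V) (a b : V) : Prop :=
  G.s0 a = b ∨ G.s1 a = b

/-- A dead end: a vertex with no directed path to `d` in `(V, E)`. -/
def DeadEnd (G : SwitchGraph V) (d w : V) : Prop :=
  ¬ Relation.ReflTransGen G.stepRel w d

/-- There is a directed walk of length `k` from `w` to `d` in `(V, E)`. -/
def Chain (G : SwitchGraph V) (w d : V) (k : ℕ) : Prop :=
  ∃ f : ℕ → V, f 0 = w ∧ f k = d ∧ ∀ i < k, G.stepRel (f i) (f (i + 1))

end SwitchGraph

section Aux
variable {V : Type} [Fintype V] [DecidableEq V]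

namespace SwitchGraph

lemma run_succ'' (G : SwitchGraph V) (o d : V) (n : ℕ) :
    G.run o d (n+1) =
      (fun p => if p.1 = d then p else G.step p) (G.run o d n) := by
  simp only [run, Function.iterate_succ_apply']
  exact if_congr Iff.rfl rfl rfl

lemma run_step_eq' (G : SwitchGraph V) (o d : V) {a b : ℕ}
    (hab : G.run o d a = G.run o d b) (k : ℕ) :
    G.run o d (a + k) = G.run o d (b + k) := by
  induction k with
  | zero => simpa
  | succ k ih => rw [← Nat.add_assoc, ← Nat.add_assoc, run_succ'', run_succ'', ih]

lemma terminates_aux (G : SwitchGraph V) (o d : V)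
    (h : ∀ N, ¬ G.DeadEnd d (G.run o d N).1) :
    ∃ N, (G.run o d N).1 = d := by
  by_contra hc
  push_neg at hc
  have hstep : ∀ t, G.run o d (t+1) = G.step (G.run o d t) := by
    intro t; rw [run_succ'']; simp [hc t]
  have hsnd : ∀ t v, (G.run o d (t+1)).2 v =
      if v = (G.run o d t).1 then !(G.run o d t).2 v else (G.run o d t).2 v := by
    intro t v
    rw [hstep]
    simp only [step, Function.update_apply]
    split
    · next he => rw [he]
    · rfl
  -- pigeonhole: the run repeats a state
  obtain ⟨i', j', hne, hij'⟩ :=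
    Finite.exists_ne_map_eq_of_infinite (fun n : ℕ => G.run o d n)
  obtain ⟨i, j, hlt, hij⟩ : ∃ i j : ℕ, i < j ∧ G.run o d i = G.run o d j := by
    rcases lt_or_gt_of_ne hne with h' | h'
    · exact ⟨i', j', h', hij'⟩
    · exact ⟨j', i', h', hij'.symm⟩
  set p := j - i with hp
  have hp0 : 0 < p := by omega
  have hper : ∀ t, i ≤ t → G.run o d (t + p) = G.run o d t := by
    intro t ht
    have h1 := run_step_eq' G o d hij.symm (t - i)
    have e1 : j + (t - i) = t + p := by omega
    have e2 : i + (t - i) = t := by omega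
    rwa [e1, e2] at h1
  -- the set of vertices visited from time i on
  set S : V → Prop := fun w => ∃ t, i ≤ t ∧ (G.run o d t).1 = w with hS
  -- no-flip lemma
  have noflip : ∀ t0 v k, (∀ s, t0 < s → s < t0+1+k → (G.run o d s).1 ≠ v) →
      (G.run o d (t0+1+k)).2 v = (G.run o d (t0+1)).2 v := by
    intro t0 v k hk
    induction k with
    | zero => rfl
    | succ k ih =>
      have h1 : (G.run o d (t0+1+k)).1 ≠ v := hk _ (by omega) (by omega)
      rw [show t0+1+(k+1) = (t0+1+k)+1 from rfl, hsnd, if_neg (fun hv => h1 hv.symm)]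
      exact ih (fun s hs1 hs2 => hk s hs1 (by omega))
  -- both switch parities occur at visit times
  have both : ∀ v, S v → ∀ b : Bool,
      ∃ t, i ≤ t ∧ (G.run o d t).1 = v ∧ (G.run o d t).2 v = b := by
    intro v ⟨t0, ht0, hv0⟩ b
    by_cases hb : (G.run o d t0).2 v = b
    · exact ⟨t0, ht0, hv0, hb⟩
    · have hb' : b = !(G.run o d t0).2 v := by
        rcases b <;> rcases hbv : (G.run o d t0).2 v <;> simp_all
      have hex : ∃ k, (G.run o d (t0+1+k)).1 = v := by
        refine ⟨p - 1, ?_⟩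
        have e : t0 + 1 + (p - 1) = t0 + p := by omega
        rw [e, hper t0 ht0, hv0]
      set k1 := Nat.find hex with hk1
      have hk1v : (G.run o d (t0+1+k1)).1 = v := Nat.find_spec hex
      have hnov : ∀ s, t0 < s → s < t0+1+k1 → (G.run o d s).1 ≠ v := by
        intro s hs1 hs2 hsv
        have hs3 : s = t0 + 1 + (s - t0 - 1) := by omega
        have := Nat.find_min hex (m := s - t0 - 1) (by omega)
        rw [← hs3] at this
        exact this hsv
      have h1 : (G.run o d (t0+1)).2 v = !(G.run o d t0).2 v := by
        rw [hsnd, if_pos hv0.symm]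
      have h2 := noflip t0 v k1 hnov
      exact ⟨t0+1+k1, by omega, hk1v, by rw [h2, h1, ← hb']⟩
  -- S is closed under stepRel
  have closed : ∀ v w, S v → G.stepRel v w → S w := by
    intro v w hv hvw
    have hbw : ∃ b : Bool, G.succ v b = w := by
      rcases hvw with h' | h'
      · exact ⟨false, by simpa [succ] using h'⟩
      · exact ⟨true, by simpa [succ] using h'⟩
    obtain ⟨b, hbw⟩ := hbw
    obtain ⟨t, ht, hv1, hv2⟩ := both v hv b
    refine ⟨t+1, by omega, ?_⟩
    rw [hstep]
    simp [step, hv1, hv2, hbw]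
  -- follow a path from (run i).1 to d
  have hSi : S (G.run o d i).1 := ⟨i, le_refl i, rfl⟩
  have hreach : Relation.ReflTransGen G.stepRel (G.run o d i).1 d := by
    have := h i
    rw [DeadEnd] at this
    exact not_not.mp this
  have key : ∀ c, Relation.ReflTransGen G.stepRel (G.run o d i).1 c → S c := by
    intro c hrc
    induction hrc with
    | refl => exact hSi
    | tail h1 h2 ih => exact closed _ _ ih h2
  have hSd : S d := key d hreach
  obtain ⟨t, _, ht⟩ := hSd
  exact hc t ht

end SwitchGraph
end Aux

open SwitchGraph

/-- If every vertex visited by the run has a directed path to `d`, then the run terminates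
within `|E| · 2^(n+1)` edge traversals, where `n = |V|`. -/
theorem stmt13 {V : Type} [Fintype V] [DecidableEq V] (G : SwitchGraph V) (o d : V)
    (hod : o ≠ d) (h : ∀ N, ¬ G.DeadEnd d (G.run o d N).1) :
    ∃ N, (G.run o d N).1 = d ∧
      N ≤ ((Finset.univ.image fun v => (v, G.s0 v)) ∪
            (Finset.univ.image fun v => (v, G.s1 v))).card
          * 2 ^ (Fintype.card V + 1) := by
  have hterm : ∃ N, (G.run o d N).1 = d := SwitchGraph.terminates_aux G o d h
  set N := Nat.find hterm with hNdef
  have hN : (G.run o d N).1 = d := Nat.find_spec hterm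
  have hmin : ∀ m < N, (G.run o d m).1 ≠ d := fun m hm => Nat.find_min hterm hm
  have key : ∀ a b : ℕ, a < b → b < N → G.run o d a ≠ G.run o d b := by
    intro a b hab hbN he
    have h1 := SwitchGraph.run_step_eq' G o d he (N - b)
    have e : b + (N - b) = N := by omega
    rw [e] at h1
    exact hmin (a + (N - b)) (by omega) (by rw [h1]; exact hN)
  have hinj : Function.Injective fun m : Fin N => G.run o d m := by
    intro a b hab
    rcases lt_trichotomy (a:ℕ) (b:ℕ) with h' | h' | h'
    · exact absurd hab (key a b h' b.isLt)
    · exact Fin.ext h'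
    · exact absurd hab.symm (key b a h' a.isLt)
  have hcard : N ≤ Fintype.card (V × (V → Bool)) := by
    simpa using Fintype.card_le_of_injective _ hinj
  have hcard' : Fintype.card (V × (V → Bool)) = Fintype.card V * 2 ^ Fintype.card V := by
    simp [Fintype.card_fun]
  have hE : Fintype.card V ≤ ((Finset.univ.image fun v => (v, G.s0 v)) ∪
            (Finset.univ.image fun v => (v, G.s1 v))).card := by
    have h1 : (Finset.univ.image fun v : V => (v, G.s0 v)).card = Fintype.card V := by
      rw [Finset.card_image_of_injective _ (fun a b hab => (Prod.ext_iff.mp hab).1)]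
      exact Finset.card_univ
    calc Fintype.card V = (Finset.univ.image fun v : V => (v, G.s0 v)).card := h1.symm
      _ ≤ _ := Finset.card_le_card Finset.subset_union_left
  refine ⟨N, hN, ?_⟩
  calc N ≤ Fintype.card V * 2 ^ Fintype.card V := by rw [← hcard']; exact hcard
    _ ≤ ((Finset.univ.image fun v => (v, G.s0 v)) ∪
            (Finset.univ.image fun v => (v, G.s1 v))).card * 2 ^ (Fintype.card V + 1) :=
      Nat.mul_le_mul hE (Nat.pow_le_pow_right (by norm_num) (by omega))
end

section
/- Any two distinct switching flows for the same (G, o, d) have different total sums, provided one of them is the run profile; more precisely, any switching flow distinct from the run profile has strictly larger total sum Σ_e x(e). -/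
open scoped Classical

open SwitchGraph

section Aux

variable {V : Type} [DecidableEq V] (G : SwitchGraph V) (o d : V)

/-- Number of departures from `v` during the first `n` steps. -/
def deps (n : ℕ) (v : V) : ℕ :=
  ((Finset.range n).filter (fun m => (G.run o d m).1 = v ∧ v ≠ d)).card

lemma run_succ (n : ℕ) :
    G.run o d (n + 1) =
      if (G.run o d n).1 = d then G.run o d n else G.step (G.run o d n) := by
  exact Function.iterate_succ_apply' _ _ _

lemma traversals_succ (n : ℕ) (v : V) (b : Bool) :
    G.traversals o d (n + 1) v b = G.traversals o d n v b +
      (if (G.run o d n).1 = v ∧ v ≠ d ∧ (G.run o d n).2 v = b then 1 else 0) := by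
  unfold SwitchGraph.traversals
  rw [Finset.range_add_one, Finset.filter_insert]
  split
  · rw [Finset.card_insert_of_notMem (by simp)]
  · simp

lemma deps_succ (n : ℕ) (v : V) :
    deps G o d (n + 1) v = deps G o d n v +
      (if (G.run o d n).1 = v ∧ v ≠ d then 1 else 0) := by
  unfold deps
  rw [Finset.range_add_one, Finset.filter_insert]
  split
  · rw [Finset.card_insert_of_notMem (by simp)]
  · simp

lemma sw_parity (n : ℕ) (v : V) :
    (G.run o d n).2 v = decide (deps G o d n v % 2 = 1) := by
  induction n with
  | zero => simp [SwitchGraph.run, deps]; rfl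
  | succ n ih =>
    rw [run_succ, deps_succ]
    by_cases hd : (G.run o d n).1 = d
    · have hc : ¬ ((G.run o d n).1 = v ∧ v ≠ d) := by
        rintro ⟨h1, h2⟩; exact h2 (h1.symm.trans hd)
      rw [if_pos hd, if_neg hc]
      simpa using ih
    · rw [if_neg hd]
      by_cases hv : (G.run o d n).1 = v
      · have hvd : v ≠ d := fun h => hd (hv.trans h)
        have hc : ((G.run o d n).1 = v ∧ v ≠ d) := ⟨hv, hvd⟩
        rw [if_pos hc]
        simp only [SwitchGraph.step, hv, Function.update_self, ih]
        rcases Nat.mod_two_eq_zero_or_one (deps G o d n v) with hk | hk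
        · have h1 : (deps G o d n v + 1) % 2 = 1 := by omega
          simp [hk, h1]
        · have h1 : ¬ ((deps G o d n v + 1) % 2 = 1) := by omega
          simp [hk, h1]
      · have hc : ¬ ((G.run o d n).1 = v ∧ v ≠ d) := fun h => hv h.1
        rw [if_neg hc]
        simp only [SwitchGraph.step]
        rw [Function.update_of_ne (fun h => hv h.symm)]
        simpa using ih

lemma counts (n : ℕ) (v : V) :
    G.traversals o d n v false + G.traversals o d n v true = deps G o d n v ∧
    G.traversals o d n v false = G.traversals o d n v true + deps G o d n v % 2 := by
  induction n with
  | zero => simp [SwitchGraph.traversals, deps]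
  | succ n ih =>
    obtain ⟨ih1, ih2⟩ := ih
    rw [traversals_succ, traversals_succ, deps_succ]
    by_cases hc : ((G.run o d n).1 = v ∧ v ≠ d)
    · have hsw := sw_parity G o d n v
      rcases Nat.mod_two_eq_zero_or_one (deps G o d n v) with hk | hk
      · have hb : (G.run o d n).2 v = false := by simp [hsw, hk]
        rw [if_pos hc, if_pos (⟨hc.1, hc.2, hb⟩ : _ ∧ _ ∧ _)]
        have : ¬ ((G.run o d n).1 = v ∧ v ≠ d ∧ (G.run o d n).2 v = true) := by
          rintro ⟨_, _, h3⟩; rw [hb] at h3; exact Bool.noConfusion h3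
        rw [if_neg this]
        omega
      · have hb : (G.run o d n).2 v = true := by simp [hsw, hk]
        rw [if_pos hc, if_pos (⟨hc.1, hc.2, hb⟩ : _ ∧ _ ∧ _)]
        have : ¬ ((G.run o d n).1 = v ∧ v ≠ d ∧ (G.run o d n).2 v = false) := by
          rintro ⟨_, _, h3⟩; rw [hb] at h3; exact Bool.noConfusion h3
        rw [if_neg this]
        omega
    · have c1 : ¬ ((G.run o d n).1 = v ∧ v ≠ d ∧ (G.run o d n).2 v = false) := by
        rintro ⟨h1, h2, _⟩; exact hc ⟨h1, h2⟩
      have c2 : ¬ ((G.run o d n).1 = v ∧ v ≠ d ∧ (G.run o d n).2 v = true) := by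
        rintro ⟨h1, h2, _⟩; exact hc ⟨h1, h2⟩
      rw [if_neg hc, if_neg c1, if_neg c2]
      omega

variable [Fintype V]

lemma inflow_mono (y z : V → Bool → ℕ) (h : ∀ u b, y u b ≤ z u b) (v : V) :
    G.inflow y v ≤ G.inflow z v := by
  unfold SwitchGraph.inflow
  refine Finset.sum_le_sum fun u _ => Finset.sum_le_sum fun b _ => ?_
  split
  · exact h u b
  · exact le_refl 0

lemma inflow_add (y : V → Bool → ℕ) (u : V) (b0 : Bool) (v : V) :
    G.inflow (fun w c => y w c + if w = u ∧ c = b0 then 1 else 0) v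
      = G.inflow y v + (if G.succ u b0 = v then 1 else 0) := by
  unfold SwitchGraph.inflow
  have split_ite : ∀ (P : Prop) [Decidable P] (a b : ℕ),
      (if P then a + b else 0) = (if P then a else 0) + (if P then b else 0) := by
    intros P _ a b; split <;> simp
  simp only [split_ite, Finset.sum_add_distrib]
  congr 1
  have key : ∀ w c, (if G.succ w c = v then (if w = u ∧ c = b0 then 1 else 0) else 0)
      = if w = u then (if c = b0 then (if G.succ w c = v then 1 else 0) else 0) else 0 := by
    intro w c
    by_cases h1 : G.succ w c = v <;> by_cases h2 : w = u <;> by_cases h3 : c = b0 <;>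
      simp [h1, h2, h3]
  simp only [key]
  have pull : ∀ w : V, (∑ c : Bool, if w = u then (if c = b0 then (if G.succ w c = v then 1 else 0) else 0) else 0)
      = if w = u then (∑ c : Bool, if c = b0 then (if G.succ w c = v then 1 else 0) else 0) else 0 := by
    intro w; split <;> simp
  simp only [pull]
  rw [Finset.sum_ite_eq' Finset.univ u
    (fun w => ∑ c : Bool, if c = b0 then (if G.succ w c = v then 1 else 0) else 0)]
  · simp only [Finset.mem_univ, if_true]
    rw [Finset.sum_ite_eq' Finset.univ b0 (fun c => if G.succ u c = v then 1 else 0)]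
    simp
  
lemma invariant (n : ℕ) (v : V) :
    SwitchGraph.outflow (G.traversals o d n) v + (if (G.run o d n).1 = v then 1 else 0)
      = G.inflow (G.traversals o d n) v + (if v = o then 1 else 0) := by
  induction n with
  | zero =>
    have hT : G.traversals o d 0 = fun _ _ => 0 := by
      funext w c; simp [SwitchGraph.traversals]
    have hr : (G.run o d 0).1 = o := rfl
    rw [hT, hr]
    simp only [SwitchGraph.outflow, SwitchGraph.inflow, ite_self, Finset.sum_const_zero,
      Finset.sum_ite_irrel]
    simp [eq_comm]
  | succ n ih =>
    by_cases hd : (G.run o d n).1 = d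
    · have hT : G.traversals o d (n + 1) = G.traversals o d n := by
        funext w c
        rw [traversals_succ]
        have : ¬ ((G.run o d n).1 = w ∧ w ≠ d ∧ (G.run o d n).2 w = c) := by
          rintro ⟨h1, h2, _⟩; exact h2 (h1.symm.trans hd)
        rw [if_neg this]; simp
      rw [hT, run_succ, if_pos hd]
      exact ih
    · have hT : G.traversals o d (n + 1) =
          fun w c => G.traversals o d n w c +
            (if w = (G.run o d n).1 ∧ c = (G.run o d n).2 (G.run o d n).1 then 1 else 0) := by
        funext w c
        rw [traversals_succ]
        congr 1
        refine if_congr ⟨?_, ?_⟩ rfl rfl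
        · rintro ⟨h1, h2, h3⟩
          exact ⟨h1.symm, by rw [h1]; exact h3.symm⟩
        · rintro ⟨h1, h2⟩
          subst h1
          exact ⟨rfl, fun h => hd h, h2.symm⟩
      have hpos : (G.run o d (n + 1)).1
          = G.succ (G.run o d n).1 ((G.run o d n).2 (G.run o d n).1) := by
        rw [run_succ, if_neg hd]
        rfl
      have hout : SwitchGraph.outflow (G.traversals o d (n + 1)) v
          = SwitchGraph.outflow (G.traversals o d n) v +
            (if (G.run o d n).1 = v then 1 else 0) := by
        rw [hT]
        simp only [SwitchGraph.outflow]
        by_cases hv : v = (G.run o d n).1 <;>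
          cases hb : (G.run o d n).2 (G.run o d n).1 <;>
          simp [hv, hb, eq_comm] <;> omega
      rw [hout, hT, inflow_add, hpos]
      split_ifs at ih ⊢ <;> omega

lemma dominates (x : V → Bool → ℕ) (hx : G.IsSwitchingFlow o d x) (hod : o ≠ d) :
    ∀ n v b, G.traversals o d n v b ≤ x v b := by
  intro n
  induction n with
  | zero => intro v b; simp [SwitchGraph.traversals]
  | succ n ih =>
    intro v b
    rw [traversals_succ]
    by_cases hc : ((G.run o d n).1 = v ∧ v ≠ d ∧ (G.run o d n).2 v = b)
    · rw [if_pos hc]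
      obtain ⟨hpos, hvd, hsw⟩ := hc
      by_contra hlt
      push_neg at hlt
      have hxb : x v b = G.traversals o d n v b := le_antisymm (by omega) (ih v b)
      obtain ⟨hsum, hdiff⟩ := counts G o d n v
      have hswp := sw_parity G o d n v
      have hout : SwitchGraph.outflow x v = SwitchGraph.outflow (G.traversals o d n) v := by
        have h1 := (hx.2 v).1
        have h2 := (hx.2 v).2
        have i1 := ih v false
        have i2 := ih v true
        simp only [SwitchGraph.outflow]
        rcases Nat.mod_two_eq_zero_or_one (deps G o d n v) with hk | hk
        · have hb : b = false := by rw [← hsw, hswp, hk]; simp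
          subst hb
          omega
        · have hb : b = true := by rw [← hsw, hswp, hk]; simp
          subst hb
          omega
      have hin : G.inflow (G.traversals o d n) v ≤ G.inflow x v :=
        inflow_mono G (G.traversals o d n) x (fun u c => ih u c) v
      have hcons := hx.1 v
      have hinv := invariant G o d n v
      rw [if_pos hpos] at hinv
      rw [if_neg hvd] at hcons
      unfold SwitchGraph.outflow at hinv hcons hout
      rcases eq_or_ne v o with ho | ho
      · rw [if_pos ho] at hinv hcons; omega
      · rw [if_neg ho] at hinv hcons; omega
    · rw [if_neg hc]
      simpa using ih v b

end Aux

/-- Any switching flow distinct from the run profile has strictly larger total sum. -/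
theorem stmt17 {V : Type} [Fintype V] [DecidableEq V] (G : SwitchGraph V) (o d : V)
    (hod : o ≠ d) (N : ℕ) (hN : (G.run o d N).1 = d)
    (x : V → Bool → ℕ) (hx : G.IsSwitchingFlow o d x) (hne : x ≠ G.traversals o d N) :
    (∑ v : V, ∑ b : Bool, G.traversals o d N v b) < ∑ v : V, ∑ b : Bool, x v b := by
  have hdom := dominates G o d x hx hod N
  have hwit : ∃ v b, G.traversals o d N v b < x v b := by
    by_contra h
    push_neg at h
    apply hne
    funext v b
    exact le_antisymm (h v b) (hdom v b)
  obtain ⟨v, b, hvb⟩ := hwit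
  refine Finset.sum_lt_sum (fun w _ => Finset.sum_le_sum fun c _ => hdom w c)
    ⟨v, Finset.mem_univ v, Finset.sum_lt_sum (fun c _ => hdom v c) ⟨b, Finset.mem_univ b, hvb⟩⟩
end
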